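/- Let n ≥ 2 and let L ≥ 1 be a positive integer with the property that for every sequence B of positive integers of length L with sum σ(B) ≤ n·L, the set B̂ of block sums of B cannot be covered by n − 1 sumfree subsets of ℤ. Then the integer interval [1, n·L + 1] cannot be partitioned into n sumfree subsets. (Consequently S(n) ≤ n·L(n).) -/

import Mathlib

def Sumfree {G : Type*} [AddCommGroup G] (S : Set G) : Prop :=
  ∀ x ∈ S, ∀ y ∈ S, x + y ∉ S

def IsBlock {G : Type*} (B A : List G) : Prop :=
  B ≠ [] ∧ ∃ L R : List G, A = L ++ B ++ R

def blockSums {G : Type*} [AddCommGroup G] (A : List G) : Set G :=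
  {s | ∃ B : List G, IsBlock B A ∧ B.sum = s}

lemma telescope_sum (f : ℕ → ℤ) (m : ℕ) :
    ((List.range m).map (fun j => f (j+1) - f j)).sum = f m - f 0 := by
  induction m with
  | zero => simp
  | succ m ih =>
      rw [List.range_succ, List.map_append, List.sum_append, ih]
      simp

lemma blockSum_eq (f : ℕ → ℤ) (Lk : ℕ) (s : ℤ)
    (hs : s ∈ blockSums ((List.range Lk).map (fun j => f (j+1) - f j))) :
    ∃ p q, p < q ∧ q ≤ Lk ∧ s = f q - f p := by
  obtain ⟨B', ⟨hne, Lf, R, hA⟩, rfl⟩ := hs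
  have hlen : Lk = Lf.length + B'.length + R.length := by
    have := congrArg List.length hA
    simp [List.length_append] at this; omega
  have hle1 : Lf.length ≤ Lk := by omega
  have hle2 : Lf.length + B'.length ≤ Lk := by omega
  have hpos : 0 < B'.length := List.length_pos_iff.mpr hne
  have ht1 : ((List.range Lk).map (fun j => f (j+1) - f j)).take Lf.length = Lf := by
    rw [hA, List.append_assoc]; exact List.take_left
  have ht2 : ((List.range Lk).map (fun j => f (j+1) - f j)).take (Lf.length + B'.length)
      = Lf ++ B' := by
    rw [hA, ← List.length_append]; exact List.take_left
  have key : ∀ m ≤ Lk, (((List.range Lk).map (fun j => f (j+1) - f j)).take m).sum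
      = f m - f 0 := by
    intro m hm
    rw [← List.map_take, List.take_range, min_eq_left hm, telescope_sum]
  have e1 := key _ hle1
  have e2 := key _ hle2
  rw [ht1] at e1
  rw [ht2, List.sum_append] at e2
  exact ⟨Lf.length, Lf.length + B'.length, by omega, hle2, by linarith⟩

def CoveredBySumfree {G : Type*} [AddCommGroup G] (n : ℕ) (X : Set G) : Prop :=
  ∃ C : Fin n → Set G, (∀ i, Sumfree (C i)) ∧ X ⊆ ⋃ i, C i

def SFPartition {G : Type*} [AddCommGroup G] (n : ℕ) (X : Set G) : Prop :=
  ∃ C : Fin n → Set G, (∀ i, Sumfree (C i)) ∧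
    Pairwise (Function.onFun Disjoint C) ∧ (⋃ i, C i) = X

theorem not_sfPartition_of_L (n L : ℕ) (hn : 2 ≤ n) (hL : 1 ≤ L)
    (h : ∀ B : List ℤ, (∀ b ∈ B, 0 < b) → B.length = L → B.sum ≤ (n : ℤ) * L →
      ¬ CoveredBySumfree (n - 1) (blockSums B)) :
    ¬ SFPartition n (Set.Icc (1 : ℤ) ((n : ℤ) * L + 1)) := by
  classical
  rintro ⟨C, hsf, hdisj, hunion⟩
  obtain ⟨m, rfl⟩ : ∃ m, n = m + 1 := ⟨n - 1, by omega⟩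
  set N : ℤ := ((m + 1 : ℕ) : ℤ) * L + 1 with hN
  set I : Finset ℤ := Finset.Icc 1 N with hI
  have hIcard : I.card = (m + 1) * L + 1 := by
    rw [hI, Int.card_Icc]
    have : N + 1 - 1 = (((m + 1) * L + 1 : ℕ) : ℤ) := by push_cast [hN]; ring
    rw [this, Int.toNat_natCast]
  set T : Fin (m + 1) → Finset ℤ := fun i => I.filter (· ∈ C i) with hT
  have hIsub : I ⊆ Finset.univ.biUnion T := by
    intro x hx
    have hx' : x ∈ ⋃ i, C i := by
      rw [hunion]; simpa [hI, hN] using hx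
    obtain ⟨_, ⟨i, rfl⟩, hxi⟩ := hx'
    exact Finset.mem_biUnion.mpr ⟨i, Finset.mem_univ _, Finset.mem_filter.mpr ⟨hx, hxi⟩⟩
  have hex : ∃ k : Fin (m + 1), L + 1 ≤ (T k).card := by
    by_contra hc
    push_neg at hc
    have h1 : I.card ≤ ∑ i : Fin (m + 1), (T i).card :=
      le_trans (Finset.card_le_card hIsub) (Finset.card_biUnion_le)
    have h2 : ∑ i : Fin (m + 1), (T i).card ≤ ∑ _i : Fin (m + 1), L :=
      Finset.sum_le_sum (fun i _ => by have := hc i; omega)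
    simp [hIcard] at h1
    simp at h2
    omega
  obtain ⟨k, hk⟩ := hex
  obtain ⟨T', hT'sub, hT'card⟩ := Finset.exists_subset_card_eq hk
  set l : List ℤ := T'.sort (· ≤ ·) with hl
  have hllen : l.length = L + 1 := by rw [hl, Finset.length_sort, hT'card]
  have hsorted : l.Pairwise (· < ·) := List.sortedLT_iff_pairwise.mp T'.sortedLT_sort
  set f : ℕ → ℤ := fun i => l.getD i 0 with hf
  have hfget : ∀ i (hi : i ≤ L), f i = l[i]'(by omega) := by
    intro i hi
    rw [hf]
    exact List.getD_eq_getElem l 0 (by omega)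
  have hfmem : ∀ i, i ≤ L → f i ∈ C k ∧ f i ∈ I := by
    intro i hi
    have h1 : f i ∈ l := by rw [hfget i hi]; exact List.getElem_mem _
    have h2 : f i ∈ T' := by rwa [hl, Finset.mem_sort] at h1
    have h3 := hT'sub h2
    rw [hT, Finset.mem_filter] at h3
    exact ⟨h3.2, h3.1⟩
  have hfmono : ∀ i j, i < j → j ≤ L → f i < f j := by
    intro i j hij hj
    rw [hfget i (by omega), hfget j hj]
    exact List.pairwise_iff_getElem.mp hsorted i j (by omega) (by omega) hij
  have hfIcc : ∀ i, i ≤ L → 1 ≤ f i ∧ f i ≤ N := by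
    intro i hi
    have := (hfmem i hi).2
    rw [hI, Finset.mem_Icc] at this
    exact this
  set B : List ℤ := (List.range L).map (fun j => f (j+1) - f j) with hB
  have hcov : CoveredBySumfree m (blockSums B) := by
    refine ⟨fun i => C (k.succAbove i), fun i => hsf _, ?_⟩
    intro s hs
    obtain ⟨p, q, hpq, hqL, rfl⟩ := blockSum_eq f L s hs
    have hfp := hfIcc p (by omega)
    have hfq := hfIcc q hqL
    have hlt := hfmono p q hpq hqL
    have hsI : f q - f p ∈ Set.Icc (1 : ℤ) N := ⟨by omega, by omega⟩
    rw [hN, ← hunion] at hsI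
    obtain ⟨_, ⟨j, rfl⟩, hj⟩ := hsI
    have hjk : j ≠ k := by
      rintro rfl
      have hpk := (hfmem p (by omega)).1
      have hqk := (hfmem q hqL).1
      exact hsf j (f p) hpk (f q - f p) hj (by simpa using hqk)
    obtain ⟨i, rfl⟩ := Fin.exists_succAbove_eq hjk
    exact Set.mem_iUnion.mpr ⟨i, hj⟩
  refine h B ?_ (by simp [hB]) ?_ hcov
  · intro b hb
    rw [hB, List.mem_map] at hb
    obtain ⟨j, hj, rfl⟩ := hb
    rw [List.mem_range] at hj
    have := hfmono j (j+1) (by omega) (by omega)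
    omega
  · have hBsum : B.sum = f L - f 0 := telescope_sum f L
    rw [hBsum]
    have h1 := (hfIcc 0 (by omega)).1
    have h2 := (hfIcc L le_rfl).2
    rw [hN] at h2
    push_cast at h2 ⊢
    linarith
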